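/- Let r ≥ 0 and 0 < ε ≤ b∞ < ∞. Let h : [0, b∞] → ℝ be bounded and measurable, and let d : [0, b∞] → (−∞, 0] be nonincreasing with d(ε) < 0. Then lim_{c→∞} c² ∫_ε^{b∞} e^{(c²/2 − r)·d(y) + cy} h(y) dy = 0. Consequently, lim_{c→∞} c² ∫_0^{b∞} e^{(c²/2 − r)·d(y) + cy} h(y) dy exists if and only if lim_{c→∞} c² ∫_0^{ε} e^{(c²/2 − r)·d(y) + cy} h(y) dy exists, and in that case the two limits coincide. -/

import Mathlib

open MeasureTheory

theorem stmt6 (r ε bInfty : ℝ) (hr : 0 ≤ r) (hε : 0 < ε) (hεb : ε ≤ bInfty)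
    (h : ℝ → ℝ) (hmeas : Measurable h) (M : ℝ) (hbd : ∀ y ∈ Set.Icc 0 bInfty, |h y| ≤ M)
    (d : ℝ → ℝ) (hd : AntitoneOn d (Set.Icc 0 bInfty)) (hd0 : ∀ y ∈ Set.Icc 0 bInfty, d y ≤ 0)
    (hdε : d ε < 0) :
    Filter.Tendsto (fun c => c ^ 2 * ∫ y in Set.Ioc ε bInfty,
        Real.exp ((c ^ 2 / 2 - r) * d y + c * y) * h y) Filter.atTop (nhds 0) ∧
    ∀ L : ℝ,
      Filter.Tendsto (fun c => c ^ 2 * ∫ y in Set.Ioc 0 bInfty,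
          Real.exp ((c ^ 2 / 2 - r) * d y + c * y) * h y) Filter.atTop (nhds L) ↔
      Filter.Tendsto (fun c => c ^ 2 * ∫ y in Set.Ioc 0 ε,
          Real.exp ((c ^ 2 / 2 - r) * d y + c * y) * h y) Filter.atTop (nhds L) := by
  have hb0 : (0:ℝ) ≤ bInfty := hε.le.trans hεb
  have hM : 0 ≤ M := (abs_nonneg _).trans (hbd 0 ⟨le_refl 0, hb0⟩)
  set α : ℝ := d ε with hα
  -- bound on |d| on the interval
  set B : ℝ := -d bInfty with hB
  have hdB : ∀ y ∈ Set.Icc 0 bInfty, |d y| ≤ B := by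
    intro y hy
    have h1 : d y ≤ 0 := hd0 y hy
    have h2 : d bInfty ≤ d y := hd hy ⟨hb0, le_refl _⟩ hy.2
    rw [abs_of_nonpos h1]
    linarith
  -- integrability for every c
  have hint : ∀ c : ℝ, IntegrableOn
      (fun y => Real.exp ((c ^ 2 / 2 - r) * d y + c * y) * h y) (Set.Ioc 0 bInfty) := by
    intro c
    have hdm : AEMeasurable d (volume.restrict (Set.Ioc 0 bInfty)) :=
      aemeasurable_restrict_of_antitoneOn measurableSet_Ioc
        (hd.mono Set.Ioc_subset_Icc_self)
    have hsm : AEStronglyMeasurable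
        (fun y => Real.exp ((c ^ 2 / 2 - r) * d y + c * y) * h y)
        (volume.restrict (Set.Ioc 0 bInfty)) := by
      refine AEMeasurable.aestronglyMeasurable ?_
      exact (Real.measurable_exp.comp_aemeasurable
        ((hdm.const_mul _).add ((aemeasurable_id.const_mul c)))).mul hmeas.aemeasurable
    refine Integrable.mono'
      (g := fun _ => Real.exp (|c ^ 2 / 2 - r| * B + |c| * bInfty) * M)
      (integrableOn_const measure_Ioc_lt_top.ne) hsm ?_
    refine (ae_restrict_iff' measurableSet_Ioc).2 (Filter.Eventually.of_forall ?_)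
    intro y hy
    have hyI : y ∈ Set.Icc 0 bInfty := ⟨hy.1.le, hy.2⟩
    have he : (c ^ 2 / 2 - r) * d y + c * y ≤ |c ^ 2 / 2 - r| * B + |c| * bInfty := by
      have h1 : (c ^ 2 / 2 - r) * d y ≤ |c ^ 2 / 2 - r| * B := by
        calc (c ^ 2 / 2 - r) * d y ≤ |(c ^ 2 / 2 - r) * d y| := le_abs_self _
          _ = |c ^ 2 / 2 - r| * |d y| := abs_mul _ _
          _ ≤ |c ^ 2 / 2 - r| * B := by
              exact mul_le_mul_of_nonneg_left (hdB y hyI) (abs_nonneg _)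
      have h2 : c * y ≤ |c| * bInfty := by
        calc c * y ≤ |c * y| := le_abs_self _
          _ = |c| * |y| := abs_mul _ _
          _ ≤ |c| * bInfty := by
              refine mul_le_mul_of_nonneg_left ?_ (abs_nonneg _)
              rw [abs_of_nonneg hy.1.le]; exact hy.2
      linarith
    have : ‖Real.exp ((c ^ 2 / 2 - r) * d y + c * y) * h y‖
        = Real.exp ((c ^ 2 / 2 - r) * d y + c * y) * |h y| := by
      rw [norm_mul, Real.norm_eq_abs, Real.norm_eq_abs, abs_of_pos (Real.exp_pos _)]
    rw [this]
    exact mul_le_mul (Real.exp_le_exp.2 he) (hbd y hyI) (abs_nonneg _) (Real.exp_pos _).le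
  -- key tendsto : c^2 * exp ((α/4) c^2) → 0
  have hα0 : α < 0 := hdε
  have hkey : Filter.Tendsto (fun c : ℝ => c ^ 2 * Real.exp (α / 4 * c ^ 2))
      Filter.atTop (nhds 0) := by
    set k : ℝ := -(α / 4) with hk
    have hkpos : 0 < k := by simp [hk]; linarith
    have h1 : Filter.Tendsto (fun x : ℝ => x * Real.exp (-x)) Filter.atTop (nhds 0) := by
      simpa using Real.tendsto_pow_mul_exp_neg_atTop_nhds_zero 1
    have h2 : Filter.Tendsto (fun u : ℝ => k * u) Filter.atTop Filter.atTop :=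
      Filter.Tendsto.const_mul_atTop hkpos Filter.tendsto_id
    have h3 : Filter.Tendsto (fun u : ℝ => (k * u) * Real.exp (-(k * u)))
        Filter.atTop (nhds 0) := h1.comp h2
    have h4 : Filter.Tendsto (fun u : ℝ => u * Real.exp (-(k * u)))
        Filter.atTop (nhds 0) := by
      have := h3.const_mul (1 / k)
      simp only [mul_zero] at this
      refine this.congr (fun u => ?_)
      field_simp
    have h5 : Filter.Tendsto (fun c : ℝ => c ^ 2) Filter.atTop Filter.atTop :=
      Filter.tendsto_pow_atTop two_ne_zero
    have := h4.comp h5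
    refine this.congr (fun c => ?_)
    simp only [Function.comp]
    congr 1
    rw [hk]; ring_nf
  -- part 1
  have part1 : Filter.Tendsto (fun c => c ^ 2 * ∫ y in Set.Ioc ε bInfty,
      Real.exp ((c ^ 2 / 2 - r) * d y + c * y) * h y) Filter.atTop (nhds 0) := by
    rw [tendsto_zero_iff_abs_tendsto_zero]
    have hKH : Filter.Tendsto
        (fun c : ℝ => (M * (bInfty - ε)) * (c ^ 2 * Real.exp (α / 4 * c ^ 2)))
        Filter.atTop (nhds 0) := by
      simpa using hkey.const_mul (M * (bInfty - ε))
    refine squeeze_zero' (Filter.Eventually.of_forall fun c => abs_nonneg _) ?_ hKH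
    -- eventual hypotheses
    have hev1 : ∀ᶠ c : ℝ in Filter.atTop, 0 ≤ c ^ 2 / 2 - r := by
      have : Filter.Tendsto (fun c : ℝ => c ^ 2 / 2 - r) Filter.atTop Filter.atTop := by
        refine Filter.tendsto_atTop_add_const_right _ (-r) ?_
        exact (Filter.tendsto_pow_atTop two_ne_zero).atTop_div_const (by norm_num)
      exact this.eventually_ge_atTop 0
    have hev2 : ∀ᶠ c : ℝ in Filter.atTop,
        α / 4 * c ^ 2 + bInfty * c - r * α ≤ 0 := by
      have : Filter.Tendsto (fun c : ℝ => α / 4 * c ^ 2 + bInfty * c - r * α)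
          Filter.atTop Filter.atBot := by
        refine Filter.tendsto_atBot_add_const_right _ (-(r * α)) ?_
        have h1 : Filter.Tendsto (fun c : ℝ => c * (α / 4 * c + bInfty))
            Filter.atTop Filter.atBot := by
          refine Filter.Tendsto.atTop_mul_atBot₀ Filter.tendsto_id ?_
          refine Filter.tendsto_atBot_add_const_right _ bInfty ?_
          exact Filter.Tendsto.const_mul_atTop_of_neg (by linarith) Filter.tendsto_id
        refine h1.congr (fun c => by ring)
      exact this.eventually_le_atBot 0
    filter_upwards [hev1, hev2, Filter.eventually_ge_atTop (0:ℝ)] with c hc2 hcq hc0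
    have hsub : Set.Ioc ε bInfty ⊆ Set.Icc 0 bInfty := fun y hy => ⟨(hε.trans hy.1).le, hy.2⟩
    set E : ℝ := (c ^ 2 / 2 - r) * α + c * bInfty with hE
    have hbound : ‖∫ y in Set.Ioc ε bInfty,
        Real.exp ((c ^ 2 / 2 - r) * d y + c * y) * h y‖
        ≤ (Real.exp E * M) * (volume (Set.Ioc ε bInfty)).toReal := by
      refine norm_setIntegral_le_of_norm_le_const measure_Ioc_lt_top ?_
      intro y hy
      have hyI : y ∈ Set.Icc 0 bInfty := hsub hy
      have hdy : d y ≤ α := hd ⟨hε.le, hεb⟩ hyI hy.1.le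
      have he : (c ^ 2 / 2 - r) * d y + c * y ≤ E := by
        have h1 : (c ^ 2 / 2 - r) * d y ≤ (c ^ 2 / 2 - r) * α :=
          mul_le_mul_of_nonneg_left hdy hc2
        have h2 : c * y ≤ c * bInfty := mul_le_mul_of_nonneg_left hy.2 hc0
        rw [hE]; linarith
      have hnorm : ‖Real.exp ((c ^ 2 / 2 - r) * d y + c * y) * h y‖
          = Real.exp ((c ^ 2 / 2 - r) * d y + c * y) * |h y| := by
        rw [norm_mul, Real.norm_eq_abs, Real.norm_eq_abs, abs_of_pos (Real.exp_pos _)]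
      rw [hnorm]
      exact mul_le_mul (Real.exp_le_exp.2 he) (hbd y hyI) (abs_nonneg _) (Real.exp_pos _).le
    have hvol : (volume (Set.Ioc ε bInfty)).toReal = bInfty - ε := by
      rw [Real.volume_Ioc, ENNReal.toReal_ofReal (by linarith)]
    have hEle : Real.exp E ≤ Real.exp (α / 4 * c ^ 2) := by
      refine Real.exp_le_exp.2 ?_
      rw [hE]; nlinarith [hcq]
    calc |c ^ 2 * ∫ y in Set.Ioc ε bInfty,
          Real.exp ((c ^ 2 / 2 - r) * d y + c * y) * h y|
        = c ^ 2 * ‖∫ y in Set.Ioc ε bInfty,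
          Real.exp ((c ^ 2 / 2 - r) * d y + c * y) * h y‖ := by
          rw [abs_mul, Real.norm_eq_abs, abs_of_nonneg (sq_nonneg c)]
      _ ≤ c ^ 2 * ((Real.exp E * M) * (bInfty - ε)) := by
          rw [← hvol]
          exact mul_le_mul_of_nonneg_left hbound (sq_nonneg c)
      _ ≤ (M * (bInfty - ε)) * (c ^ 2 * Real.exp (α / 4 * c ^ 2)) := by
          have h1 : Real.exp E * M * (bInfty - ε)
              ≤ Real.exp (α / 4 * c ^ 2) * M * (bInfty - ε) := by
            refine mul_le_mul_of_nonneg_right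
              (mul_le_mul_of_nonneg_right hEle hM) (by linarith)
          calc c ^ 2 * (Real.exp E * M * (bInfty - ε))
              ≤ c ^ 2 * (Real.exp (α / 4 * c ^ 2) * M * (bInfty - ε)) :=
                mul_le_mul_of_nonneg_left h1 (sq_nonneg c)
            _ = (M * (bInfty - ε)) * (c ^ 2 * Real.exp (α / 4 * c ^ 2)) := by ring
  refine ⟨part1, fun L => ?_⟩
  have hsplit : ∀ c : ℝ,
      (∫ y in Set.Ioc 0 bInfty, Real.exp ((c ^ 2 / 2 - r) * d y + c * y) * h y)
      = (∫ y in Set.Ioc 0 ε, Real.exp ((c ^ 2 / 2 - r) * d y + c * y) * h y)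
      + (∫ y in Set.Ioc ε bInfty, Real.exp ((c ^ 2 / 2 - r) * d y + c * y) * h y) := by
    intro c
    rw [← Set.Ioc_union_Ioc_eq_Ioc hε.le hεb]
    exact setIntegral_union (Set.Ioc_disjoint_Ioc_of_le le_rfl) measurableSet_Ioc
      ((hint c).mono_set (Set.Ioc_subset_Ioc_right hεb))
      ((hint c).mono_set (Set.Ioc_subset_Ioc_left hε.le))
  constructor
  · intro H
    have := H.sub part1
    rw [sub_zero] at this
    refine this.congr (fun c => ?_)
    rw [hsplit c]; ring
  · intro H
    have := H.add part1
    rw [add_zero] at this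
    refine this.congr (fun c => ?_)
    rw [hsplit c]; ring
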